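/- Let α_L, β_L, α_R, β_R > 0, γ_L, γ_R ∈ ℝ with γ_L/β_L − γ_R/β_R ≠ 0, let ξ ∈ ℝ with β_R − ξ ≠ 0, and let u₁ > 0, w₁ ∈ ℝ. Define v₂ = √(2β_L/α_L)·√u₁, w₂ = w₁ − (√2·γ_L/√(α_Lβ_L))·√u₁, v₃ = −v₂, w₃ = w₂ + (2γ_R/(β_R − ξ))·v₂, u₄ = (α_L/(2β_L))·v₃², and w₄ = w₃ + (γ_L/β_L)·v₃. Then u₄ = u₁ and w₄ = w₁ − c·κ₂(ξ)·√u₁, where c = (2√(2β_L)/√α_L)·(γ_L/β_L − γ_R/β_R) and κ₂(ξ) = (γ_L/β_L − γ_R/(β_R − ξ))/(γ_L/β_L − γ_R/β_R). -/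

import Mathlib

/-- Composing the three leading-order steps of the stochastic discontinuity map with
coloured noise `ξ` replacing `β_R` by `β_R − ξ` gives `u₄ = u₁` and
`w₄ = w₁ − c·κ₂(ξ)·√u₁`, where `c = (2√(2β_L)/√α_L)(γ_L/β_L − γ_R/β_R)` and
`κ₂(ξ) = (γ_L/β_L − γ_R/(β_R − ξ))/(γ_L/β_L − γ_R/β_R)`. -/
theorem stochastic_discontinuity_map_N2
    (αL βL αR βR γL γR ξ u₁ w₁ : ℝ)
    (hαL : 0 < αL) (hβL : 0 < βL) (hαR : 0 < αR) (hβR : 0 < βR)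
    (hne : γL / βL - γR / βR ≠ 0) (hξ : βR - ξ ≠ 0)
    (hu₁ : 0 < u₁)
    (v₂ w₂ v₃ w₃ u₄ w₄ c κ₂ : ℝ)
    (hv₂ : v₂ = Real.sqrt (2 * βL / αL) * Real.sqrt u₁)
    (hw₂ : w₂ = w₁ - Real.sqrt 2 * γL / Real.sqrt (αL * βL) * Real.sqrt u₁)
    (hv₃ : v₃ = -v₂)
    (hw₃ : w₃ = w₂ + 2 * γR / (βR - ξ) * v₂)
    (hu₄ : u₄ = αL / (2 * βL) * v₃ ^ 2)
    (hw₄ : w₄ = w₃ + γL / βL * v₃)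
    (hc : c = 2 * Real.sqrt (2 * βL) / Real.sqrt αL * (γL / βL - γR / βR))
    (hκ₂ : κ₂ = (γL / βL - γR / (βR - ξ)) / (γL / βL - γR / βR)) :
    u₄ = u₁ ∧ w₄ = w₁ - c * κ₂ * Real.sqrt u₁ := by
  have hαL' := hαL.le
  have hβL' := hβL.le
  have hu' := hu₁.le
  have h2βL : Real.sqrt (2 * βL) = Real.sqrt 2 * Real.sqrt βL := Real.sqrt_mul (by norm_num) _
  have hdiv : Real.sqrt (2 * βL / αL) = Real.sqrt (2 * βL) / Real.sqrt αL :=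
    Real.sqrt_div (by positivity) _
  have hmul : Real.sqrt (αL * βL) = Real.sqrt αL * Real.sqrt βL := Real.sqrt_mul hαL' _
  have hq : Real.sqrt (2 * βL / αL) ^ 2 = 2 * βL / αL := Real.sq_sqrt (by positivity)
  have hsu : Real.sqrt u₁ ^ 2 = u₁ := Real.sq_sqrt hu'
  have hsb : Real.sqrt βL ^ 2 = βL := Real.sq_sqrt hβL'
  have hsa0 : Real.sqrt αL ≠ 0 := by positivity
  have hsb0 : Real.sqrt βL ≠ 0 := by positivity
  have hck : c * κ₂ = 2 * Real.sqrt 2 * Real.sqrt βL / Real.sqrt αL *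
      (γL / βL - γR / (βR - ξ)) := by
    rw [hc, hκ₂, h2βL, mul_assoc, mul_comm (γL / βL - γR / βR),
      div_mul_cancel₀ _ hne]
    ring
  constructor
  · have hv : v₃ ^ 2 = 2 * βL / αL * u₁ := by
      rw [hv₃, neg_sq, hv₂, mul_pow, hq, hsu]
    rw [hu₄, hv]
    field_simp
  · rw [hw₄, hw₃, hw₂, hv₃, hv₂, hck, hdiv, h2βL, hmul]
    field_simp
    linear_combination (Real.sqrt 2 * γL * Real.sqrt u₁ *
      (βR - ξ)) * hsb
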